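/- Let (u, v, pu, pv) solve the FLRW null geodesic system on an interval I with angular momentum L ≥ 0, and suppose the mass shell relation 4t²r²·pu·pv = L² holds at some point of I. Then the function s ↦ t(s)·(pu(s) + pv(s)) is constant on I. -/

import Mathlib

/-- The time coordinate `t = (v+u)²/4` along a curve in double null coordinates. -/
noncomputable def tOf (u v : ℝ → ℝ) (s : ℝ) : ℝ := (v s + u s) ^ 2 / 4

/-- The radial coordinate `r = v − u` along a curve in double null coordinates. -/
noncomputable def rOf (u v : ℝ → ℝ) (s : ℝ) : ℝ := v s - u s

/-- **The FLRW null geodesic system** with angular momentum `L` on a set `I ⊆ ℝ`: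
`u' = pu`, `v' = pv`,
`pu' = −t^{−1/2}·pu² − (1/2)(1/(2t^{1/2}) + 1/r)·L²/(t²r²)`,
`pv' = −t^{−1/2}·pv² − (1/2)(1/(2t^{1/2}) − 1/r)·L²/(t²r²)`,
where `t = (v+u)²/4` and `r = v−u` are required to satisfy `v+u > 0`, `r > 0` on `I`,
and `pu ≥ 0`, `pv ≥ 0` on `I`. -/
def FLRWGeodesicSystem (I : Set ℝ) (L : ℝ) (u v pu pv : ℝ → ℝ) : Prop :=
  (∀ s ∈ I, 0 < v s + u s) ∧
  (∀ s ∈ I, 0 < rOf u v s) ∧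
  (∀ s ∈ I, 0 ≤ pu s) ∧
  (∀ s ∈ I, 0 ≤ pv s) ∧
  (∀ s ∈ I, HasDerivAt u (pu s) s) ∧
  (∀ s ∈ I, HasDerivAt v (pv s) s) ∧
  (∀ s ∈ I, HasDerivAt pu
    (-(pu s) ^ 2 / Real.sqrt (tOf u v s)
      - 1 / 2 * (1 / (2 * Real.sqrt (tOf u v s)) + 1 / rOf u v s) * L ^ 2
          / ((tOf u v s) ^ 2 * (rOf u v s) ^ 2)) s) ∧
  (∀ s ∈ I, HasDerivAt pv
    (-(pv s) ^ 2 / Real.sqrt (tOf u v s)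
      - 1 / 2 * (1 / (2 * Real.sqrt (tOf u v s)) - 1 / rOf u v s) * L ^ 2
          / ((tOf u v s) ^ 2 * (rOf u v s) ^ 2)) s)

/-- A function with vanishing derivative on a convex set is constant there. -/
lemma flrw_aux_const_of_deriv_zero {I : Set ℝ} (hI : Convex ℝ I) {f : ℝ → ℝ}
    (hf : ∀ x ∈ I, HasDerivAt f 0 x) :
    ∀ x ∈ I, ∀ y ∈ I, f x = f y := by
  intro x hx y hy
  have h := hI.norm_image_sub_le_of_norm_hasDerivWithin_le (C := 0)
    (f' := fun _ => (0 : ℝ)) (fun z hz => (hf z hz).hasDerivWithinAt)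
    (fun z _ => by simp) hx hy
  simp only [zero_mul, norm_le_zero_iff, sub_eq_zero] at h
  exact h.symm

set_option maxHeartbeats 1000000 in
/-- **Conservation of the particle energy along FLRW null geodesics.**
If `(u,v,pu,pv)` solves the FLRW null geodesic system on an interval `I` with angular
momentum `L ≥ 0` and the mass shell relation `4t²r²·pu·pv = L²` holds at some point of
`I`, then `s ↦ t(s)·(pu(s) + pv(s))` is constant on `I`. -/
theorem flrw_geodesic_energy_constant (I : Set ℝ) (hI : Convex ℝ I) (L : ℝ) (hL : 0 ≤ L)
    (u v pu pv : ℝ → ℝ) (hsys : FLRWGeodesicSystem I L u v pu pv)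
    (hms : ∃ s ∈ I, 4 * (tOf u v s) ^ 2 * (rOf u v s) ^ 2 * pu s * pv s = L ^ 2) :
    ∀ s₁ ∈ I, ∀ s₂ ∈ I,
      tOf u v s₁ * (pu s₁ + pv s₁) = tOf u v s₂ * (pu s₂ + pv s₂) := by
  obtain ⟨hA, hr, hpu0, hpv0, hu, hv, hpu', hpv'⟩ := hsys
  have ht : ∀ s ∈ I, 0 < tOf u v s := fun s hs => by
    have := hA s hs
    unfold tOf; positivity
  have hsq : ∀ s ∈ I, Real.sqrt (tOf u v s) = (v s + u s) / 2 := fun s hs => by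
    rw [show tOf u v s = ((v s + u s) / 2) ^ 2 by unfold tOf; ring,
      Real.sqrt_sq (by linarith [hA s hs])]
  have htd : ∀ s ∈ I, HasDerivAt (tOf u v) ((v s + u s) / 2 * (pu s + pv s)) s := by
    intro s hs
    have h := (((hv s hs).add (hu s hs)).pow 2).div_const 4
    unfold tOf
    refine h.congr_deriv ?_
    simp only [Pi.add_apply, Pi.mul_apply, Pi.pow_apply]
    push_cast
    ring
  have hrd : ∀ s ∈ I, HasDerivAt (rOf u v) (pv s - pu s) s := fun s hs =>
    (hv s hs).sub (hu s hs)
  set K : ℝ → ℝ :=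
    fun s => 4 * tOf u v s * pu s * pv s - L ^ 2 / (tOf u v s * rOf u v s ^ 2) with hKdef
  have hKd : ∀ s ∈ I, HasDerivAt K 0 s := by
    intro s hs
    have htne : tOf u v s ≠ 0 := ne_of_gt (ht s hs)
    have hrne : rOf u v s ≠ 0 := ne_of_gt (hr s hs)
    have hAne : v s + u s ≠ 0 := ne_of_gt (hA s hs)
    have h1 := (((htd s hs).const_mul 4).mul (hpu' s hs)).mul (hpv' s hs)
    have h2 := (hasDerivAt_const s (L ^ 2)).div ((htd s hs).mul ((hrd s hs).pow 2))
      (by exact mul_ne_zero htne (pow_ne_zero 2 hrne))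
    have h := h1.sub h2
    refine h.congr_deriv ?_
    simp only [Pi.add_apply, Pi.mul_apply, Pi.pow_apply]
    rw [hsq s hs, show tOf u v s = ((v s + u s) / 2) ^ 2 by unfold tOf; ring]
    field_simp
    ring
  obtain ⟨s₀, hs₀, hms0⟩ := hms
  have hK0 : ∀ s ∈ I, K s = 0 := by
    intro s hs
    have e : K s = K s₀ := flrw_aux_const_of_deriv_zero hI hKd s hs s₀ hs₀
    rw [e, hKdef]
    have htne : tOf u v s₀ ≠ 0 := ne_of_gt (ht s₀ hs₀)
    have hrne : rOf u v s₀ ≠ 0 := ne_of_gt (hr s₀ hs₀)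
    rw [← hms0]
    field_simp
    ring
  have hEd : ∀ s ∈ I, HasDerivAt (fun s => tOf u v s * (pu s + pv s)) 0 s := by
    intro s hs
    have htne : tOf u v s ≠ 0 := ne_of_gt (ht s hs)
    have hrne : rOf u v s ≠ 0 := ne_of_gt (hr s hs)
    have hAne : v s + u s ≠ 0 := ne_of_gt (hA s hs)
    have hK := hK0 s hs
    rw [hKdef] at hK
    have h' : 4 * tOf u v s * pu s * pv s = L ^ 2 / (tOf u v s * rOf u v s ^ 2) :=
      sub_eq_zero.mp hK
    have hL2 : L ^ 2 = 4 * tOf u v s ^ 2 * rOf u v s ^ 2 * pu s * pv s := by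
      rw [(div_eq_iff (by positivity)).mp h'.symm]
      ring
    have h := (htd s hs).mul ((hpu' s hs).add (hpv' s hs))
    refine h.congr_deriv ?_
    simp only [Pi.add_apply, Pi.mul_apply, Pi.pow_apply]
    rw [hsq s hs, hL2]
    have ht' : tOf u v s = ((v s + u s) / 2) ^ 2 := by unfold tOf; ring
    rw [ht']
    field_simp
    ring
  exact fun s₁ hs₁ s₂ hs₂ =>
    flrw_aux_const_of_deriv_zero hI hEd s₁ hs₁ s₂ hs₂
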